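/- Let f : [a,b] → ℝ be continuous and integrable on [a,b] with 0 ≤ a < b, let k > 1, and suppose |f|^{k/(k-1)} is quasi-convex on [a,b]. Then for any fixed p, q > 0, ∫_a^b (x-a)^p (b-x)^q f(x) dx ≤ (b-a)^{p+q+1} [β(kp+1, kq+1)]^{1/k} (max{|f(a)|^{k/(k-1)}, |f(b)|^{k/(k-1)}})^{(k-1)/k}. -/

import Mathlib

open Real Set MeasureTheory intervalIntegral

noncomputable def beta (x y : ℝ) : ℝ := ∫ t in (0:ℝ)..1, t ^ (x-1) * (1-t) ^ (y-1)

def QuasiConvexOn' (s : Set ℝ) (g : ℝ → ℝ) : Prop :=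
  ∀ x ∈ s, ∀ y ∈ s, ∀ lam ∈ Set.Icc (0:ℝ) 1, g (lam*x + (1-lam)*y) ≤ max (g x) (g y)

-- Hölder step: ∫ t^p (1-t)^q ≤ (∫ t^(kp) (1-t)^(kq))^(1/k)
lemma holder_step (p q k : ℝ) (hp : 0 < p) (hq : 0 < q) (hk : 1 < k) :
    (∫ t in (0:ℝ)..1, t ^ p * (1-t) ^ q)
      ≤ (∫ t in (0:ℝ)..1, t ^ (k*p) * (1-t) ^ (k*q)) ^ (1/k) := by
  have hk0 : (0:ℝ) < k := by linarith
  set μ := volume.restrict (Set.Ioc (0:ℝ) 1) with hμ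
  haveI : IsFiniteMeasure μ := ⟨by
    rw [hμ, Measure.restrict_apply_univ, Real.volume_Ioc]
    simp⟩
  have hpq : k.HolderConjugate (k/(k-1)) := Real.HolderConjugate.conjExponent hk
  have hrp : Continuous fun t : ℝ => t ^ p := by
    rw [continuous_iff_continuousAt]
    exact fun x => Real.continuousAt_rpow_const x p (Or.inr hp.le)
  have hrq : Continuous fun t : ℝ => (1-t) ^ q := by
    rw [continuous_iff_continuousAt]
    exact fun x =>
      (Real.continuousAt_rpow_const (1-x) q (Or.inr hq.le)).comp (by fun_prop)
  have hFc : Continuous fun t : ℝ => t ^ p * (1-t) ^ q := hrp.mul hrq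
  have hnn : 0 ≤ᵐ[μ] fun t : ℝ => t ^ p * (1-t) ^ q := by
    rw [hμ]
    refine (ae_restrict_iff' measurableSet_Ioc).mpr (Filter.Eventually.of_forall ?_)
    intro t ht
    exact mul_nonneg (Real.rpow_nonneg ht.1.le _) (Real.rpow_nonneg (by linarith [ht.2]) _)
  have hmem : MemLp (fun t : ℝ => t ^ p * (1-t) ^ q) (ENNReal.ofReal k) μ := by
    refine MemLp.of_bound hFc.aestronglyMeasurable 1 ?_
    rw [hμ]
    refine (ae_restrict_iff' measurableSet_Ioc).mpr (Filter.Eventually.of_forall ?_)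
    intro t ht
    have h1 : t ^ p ≤ 1 := Real.rpow_le_one ht.1.le ht.2 hp.le
    have h2 : (1-t) ^ q ≤ 1 := Real.rpow_le_one (by linarith [ht.2]) (by linarith [ht.1]) hq.le
    have := mul_nonneg (Real.rpow_nonneg ht.1.le p) (Real.rpow_nonneg (show (0:ℝ) ≤ 1-t by linarith [ht.2]) q)
    rw [Real.norm_of_nonneg this]
    calc t ^ p * (1-t) ^ q ≤ 1 * 1 :=
          mul_le_mul h1 h2 (Real.rpow_nonneg (by linarith [ht.2]) _) zero_le_one
      _ = 1 := by ring
  have hmem1 : MemLp (fun _ : ℝ => (1:ℝ)) (ENNReal.ofReal (k/(k-1))) μ := memLp_const 1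
  have H := MeasureTheory.integral_mul_le_Lp_mul_Lq_of_nonneg hpq hnn
      (Filter.Eventually.of_forall (fun _ => zero_le_one)) hmem hmem1
  simp only [mul_one] at H
  have h1int : ∫ _ : ℝ, (1:ℝ) ^ (k/(k-1)) ∂μ = 1 := by
    rw [hμ]
    simp [Real.volume_Ioc]
  rw [h1int, Real.one_rpow, mul_one] at H
  rw [intervalIntegral.integral_of_le zero_le_one, intervalIntegral.integral_of_le zero_le_one]
  refine le_trans H (le_of_eq ?_)
  congr 1
  rw [hμ]
  refine setIntegral_congr_fun measurableSet_Ioc (fun t ht => ?_)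
  have h0t : (0:ℝ) ≤ t := ht.1.le
  have h1t : (0:ℝ) ≤ 1 - t := by linarith [ht.2]
  rw [Real.mul_rpow (Real.rpow_nonneg h0t _) (Real.rpow_nonneg h1t _),
    ← Real.rpow_mul h0t, ← Real.rpow_mul h1t, mul_comm p k, mul_comm q k]

theorem stmt13 (a b p q : ℝ) (f : ℝ → ℝ)
    (ha : 0 ≤ a) (hab : a < b) (hp : 0 < p) (hq : 0 < q)
    (hcont : ContinuousOn f (Set.Icc a b))
    (hint : IntervalIntegrable f volume a b)
    (k : ℝ) (hk : 1 < k)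
    (hf : QuasiConvexOn' (Set.Icc a b) (fun x => |f x| ^ (k/(k-1)))) :
    ∫ x in a..b, (x-a)^p * (b-x)^q * f x
      ≤ (b-a)^(p+q+1) * (beta (k*p+1) (k*q+1))^(1/k)
          * (max (|f a| ^ (k/(k-1))) (|f b| ^ (k/(k-1)))) ^ ((k-1)/k) := by
  have hk0 : (0:ℝ) < k := by linarith
  have hk1 : (0:ℝ) < k - 1 := by linarith
  have hba : (0:ℝ) < b - a := by linarith
  set M := max (|f a| ^ (k/(k-1))) (|f b| ^ (k/(k-1))) with hM
  have hM0 : 0 ≤ M := le_trans (Real.rpow_nonneg (abs_nonneg _) _) (le_max_left _ _)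
  have hMc0 : 0 ≤ M ^ ((k-1)/k) := Real.rpow_nonneg hM0 _
  -- pointwise bound on |f|
  have hfb : ∀ x ∈ Set.Icc a b, |f x| ≤ M ^ ((k-1)/k) := by
    intro x hx
    have hlam : (b-x)/(b-a) ∈ Set.Icc (0:ℝ) 1 :=
      ⟨div_nonneg (by linarith [hx.2]) hba.le, (div_le_one hba).mpr (by linarith [hx.1])⟩
    have key := hf a ⟨le_refl a, hab.le⟩ b ⟨hab.le, le_refl b⟩ _ hlam
    simp only at key
    have hxeq : (b-x)/(b-a)*a + (1-(b-x)/(b-a))*b = x := by field_simp; ring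
    rw [hxeq] at key
    have hexp : k/(k-1)*((k-1)/k) = 1 := by field_simp
    have hfx : |f x| = (|f x| ^ (k/(k-1))) ^ ((k-1)/k) := by
      rw [← Real.rpow_mul (abs_nonneg _), hexp, Real.rpow_one]
    rw [hfx]
    exact Real.rpow_le_rpow (Real.rpow_nonneg (abs_nonneg _) _) key (by positivity)
  -- continuity of the weight
  have hgp : Continuous fun x : ℝ => (x-a) ^ p := by
    rw [continuous_iff_continuousAt]
    exact fun x =>
      (Real.continuousAt_rpow_const (x-a) p (Or.inr hp.le)).comp
        (f := fun x : ℝ => x - a) (by fun_prop)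
  have hgq : Continuous fun x : ℝ => (b-x) ^ q := by
    rw [continuous_iff_continuousAt]
    exact fun x =>
      (Real.continuousAt_rpow_const (b-x) q (Or.inr hq.le)).comp
        (f := fun x : ℝ => b - x) (by fun_prop)
  have hgc : Continuous fun x : ℝ => (x-a) ^ p * (b-x) ^ q := hgp.mul hgq
  have hgnn : ∀ x ∈ Set.Icc a b, 0 ≤ (x-a) ^ p * (b-x) ^ q := fun x hx =>
    mul_nonneg (Real.rpow_nonneg (by linarith [hx.1]) _)
      (Real.rpow_nonneg (by linarith [hx.2]) _)
  have huIcc : Set.uIcc a b = Set.Icc a b := Set.uIcc_of_le hab.le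
  have hi1 : IntervalIntegrable (fun x => (x-a)^p * (b-x)^q * f x) volume a b := by
    apply ContinuousOn.intervalIntegrable
    rw [huIcc]; exact hgc.continuousOn.mul hcont
  have hi2 : IntervalIntegrable (fun x => (x-a)^p * (b-x)^q * |f x|) volume a b := by
    apply ContinuousOn.intervalIntegrable
    rw [huIcc]; exact hgc.continuousOn.mul hcont.abs
  have hi3 : IntervalIntegrable (fun x => (x-a)^p * (b-x)^q * M ^ ((k-1)/k)) volume a b :=
    (hgc.mul continuous_const).intervalIntegrable a b
  have step1 : ∫ x in a..b, (x-a)^p * (b-x)^q * f x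
      ≤ ∫ x in a..b, (x-a)^p * (b-x)^q * |f x| := by
    refine intervalIntegral.integral_mono_on hab.le hi1 hi2 (fun x hx => ?_)
    exact mul_le_mul_of_nonneg_left (le_abs_self _) (hgnn x hx)
  have step2 : ∫ x in a..b, (x-a)^p * (b-x)^q * |f x|
      ≤ ∫ x in a..b, (x-a)^p * (b-x)^q * M ^ ((k-1)/k) := by
    refine intervalIntegral.integral_mono_on hab.le hi2 hi3 (fun x hx => ?_)
    exact mul_le_mul_of_nonneg_left (hfb x hx) (hgnn x hx)
  have step3 : ∫ x in a..b, (x-a)^p * (b-x)^q * M ^ ((k-1)/k)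
      = (∫ x in a..b, (x-a)^p * (b-x)^q) * M ^ ((k-1)/k) :=
    intervalIntegral.integral_mul_const _ _
  -- substitution
  have hsub := intervalIntegral.integral_comp_mul_add (a := (0:ℝ)) (b := 1)
      (fun x => (x-a)^p * (b-x)^q) (ne_of_gt hba) a
  have hend0 : (b-a)*0 + a = a := by ring
  have hend1 : (b-a)*1 + a = b := by ring
  rw [hend0, hend1] at hsub
  have hcongr : (∫ t in (0:ℝ)..1, ((b-a)*t + a - a)^p * (b-((b-a)*t+a))^q)
      = ∫ t in (0:ℝ)..1, ((b-a)^p * (b-a)^q) * (t^p * (1-t)^q) := by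
    refine intervalIntegral.integral_congr (fun t ht => ?_)
    rw [Set.uIcc_of_le zero_le_one] at ht
    have e1 : (b-a)*t + a - a = (b-a)*t := by ring
    have e2 : b - ((b-a)*t + a) = (b-a)*(1-t) := by ring
    rw [e1, e2, Real.mul_rpow hba.le ht.1, Real.mul_rpow hba.le (by linarith [ht.2])]
    ring
  have step4 : (∫ x in a..b, (x-a)^p * (b-x)^q)
      = (b-a)^(p+q+1) * ∫ t in (0:ℝ)..1, t^p * (1-t)^q := by
    have h5 := hsub
    rw [hcongr, intervalIntegral.integral_const_mul] at h5
    have hpow : (b-a)^(p+q+1) = (b-a) * ((b-a)^p * (b-a)^q) := by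
      rw [Real.rpow_add hba, Real.rpow_add hba, Real.rpow_one]; ring
    rw [hpow]
    rw [smul_eq_mul] at h5
    field_simp at h5 ⊢
    linarith [h5]
  have hbeta : beta (k*p+1) (k*q+1) = ∫ t in (0:ℝ)..1, t^(k*p) * (1-t)^(k*q) := by
    simp only [beta, add_sub_cancel_right]
  have hI1 : (∫ t in (0:ℝ)..1, t^p * (1-t)^q) ≤ (beta (k*p+1) (k*q+1))^(1/k) := by
    rw [hbeta]; exact holder_step p q k hp hq hk
  calc ∫ x in a..b, (x-a)^p * (b-x)^q * f x
      ≤ ∫ x in a..b, (x-a)^p * (b-x)^q * M ^ ((k-1)/k) := step1.trans step2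
    _ = ((b-a)^(p+q+1) * ∫ t in (0:ℝ)..1, t^p * (1-t)^q) * M ^ ((k-1)/k) := by
        rw [step3, step4]
    _ ≤ ((b-a)^(p+q+1) * (beta (k*p+1) (k*q+1))^(1/k)) * M ^ ((k-1)/k) := by
        refine mul_le_mul_of_nonneg_right (mul_le_mul_of_nonneg_left hI1 ?_) hMc0
        exact Real.rpow_nonneg hba.le _
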